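/- Let c > 0 and for each R > 0 let φ_R : [0,∞) → [0,1] be continuously differentiable with φ_R(u) = 1 for 0 ≤ u ≤ R, φ_R(u) = 0 for u ≥ 2R, and |φ_R′(u)| ≤ c/R for all u. Then for every real s the double integral T₂(s,R) = (1/2) ∫_0^∞ t^{s−1} ( ∫_0^∞ φ_R′(u) Σ_{n=1}^∞ e^{2λ_n u} erfc(u/√t + λ_n√t) du ) dt converges absolutely and lim_{R→∞} T₂(s,R) = 0. -/

import Mathlib

open Real MeasureTheory Set Filter

/-- The complementary error function `erfc(x) = (2/√π) ∫_x^∞ e^{−ξ²} dξ`. -/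
noncomputable def erfc (x : ℝ) : ℝ :=
  (2 / Real.sqrt π) * ∫ ξ in Set.Ioi x, Real.exp (-ξ ^ 2)

lemma integrable_exp_neg_sq : Integrable (fun x : ℝ => Real.exp (-x ^ 2)) := by
  have := integrable_exp_neg_mul_sq (b := 1) one_pos
  simpa using this

lemma erfc_nonneg (x : ℝ) : 0 ≤ erfc x :=
  mul_nonneg (by positivity) (integral_nonneg fun ξ => (Real.exp_pos _).le)

lemma erfc_antitone : Antitone erfc := by
  intro a b hab
  unfold erfc
  have h : (∫ ξ in Ioi b, Real.exp (-ξ ^ 2)) ≤ ∫ ξ in Ioi a, Real.exp (-ξ ^ 2) :=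
    setIntegral_mono_set integrable_exp_neg_sq.integrableOn
      (Filter.Eventually.of_forall fun ξ => (Real.exp_pos _).le)
      (HasSubset.Subset.eventuallyLE (Ioi_subset_Ioi hab))
  exact mul_le_mul_of_nonneg_left h (by positivity)

lemma erfc_measurable : Measurable erfc := erfc_antitone.measurable

lemma integral_Ioi_exp_neg_sq_shift (x : ℝ) :
    (∫ ξ in Ioi x, Real.exp (-(ξ - x) ^ 2)) = Real.sqrt π / 2 := by
  have A : MeasurableEmbedding fun y : ℝ => y + x :=
    (Homeomorph.addRight x).isClosedEmbedding.measurableEmbedding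
  have h := A.setIntegral_map (μ := volume) (fun ξ => Real.exp (-(ξ - x) ^ 2)) (Ioi x)
  rw [map_add_right_eq_self volume x] at h
  have hpre : (fun y : ℝ => y + x) ⁻¹' Ioi x = Ioi 0 := by
    ext y; simp
  rw [hpre] at h
  simp only [add_sub_cancel_right] at h
  rw [h]
  have := integral_gaussian_Ioi 1
  simpa using this

lemma erfc_le_exp_neg_sq {x : ℝ} (hx : 0 ≤ x) : erfc x ≤ Real.exp (-x ^ 2) := by
  have hb : (∫ ξ in Ioi x, Real.exp (-ξ ^ 2)) ≤ Real.exp (-x ^ 2) * (Real.sqrt π / 2) := by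
    have hint : IntegrableOn (fun ξ : ℝ => Real.exp (-x ^ 2) * Real.exp (-(ξ - x) ^ 2)) (Ioi x) := by
      have h1 : Integrable (fun ξ : ℝ => Real.exp (-(ξ - x) ^ 2)) :=
        integrable_exp_neg_sq.comp_sub_right x
      exact (h1.const_mul _).integrableOn
    calc (∫ ξ in Ioi x, Real.exp (-ξ ^ 2))
        ≤ ∫ ξ in Ioi x, Real.exp (-x ^ 2) * Real.exp (-(ξ - x) ^ 2) := by
          refine setIntegral_mono_on integrable_exp_neg_sq.integrableOn hint measurableSet_Ioi ?_
          intro ξ hξ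
          rw [← Real.exp_add]
          exact Real.exp_le_exp.2 (by nlinarith [mem_Ioi.1 hξ])
      _ = Real.exp (-x ^ 2) * ∫ ξ in Ioi x, Real.exp (-(ξ - x) ^ 2) := by
          rw [integral_const_mul]
      _ = Real.exp (-x ^ 2) * (Real.sqrt π / 2) := by rw [integral_Ioi_exp_neg_sq_shift]
  unfold erfc
  have hπ : 0 < Real.sqrt π := Real.sqrt_pos.2 Real.pi_pos
  calc (2 / Real.sqrt π) * ∫ ξ in Ioi x, Real.exp (-ξ ^ 2)
      ≤ (2 / Real.sqrt π) * (Real.exp (-x ^ 2) * (Real.sqrt π / 2)) :=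
        mul_le_mul_of_nonneg_left hb (by positivity)
    _ = Real.exp (-x ^ 2) := by field_simp

lemma term_nonneg (lam t u : ℝ) :
    0 ≤ Real.exp (2 * lam * u) * erfc (u / Real.sqrt t + lam * Real.sqrt t) :=
  mul_nonneg (Real.exp_pos _).le (erfc_nonneg _)

lemma term_le {lam t u : ℝ} (ht : 0 < t) (hu : 0 ≤ u) (hlam : 0 ≤ lam) :
    Real.exp (2 * lam * u) * erfc (u / Real.sqrt t + lam * Real.sqrt t)
      ≤ Real.exp (-u ^ 2 / t) * Real.exp (-t * lam ^ 2) := by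
  have hst : Real.sqrt t ^ 2 = t := Real.sq_sqrt ht.le
  have hst0 : Real.sqrt t ≠ 0 := ne_of_gt (Real.sqrt_pos.2 ht)
  have hx : 0 ≤ u / Real.sqrt t + lam * Real.sqrt t :=
    add_nonneg (div_nonneg hu (Real.sqrt_nonneg t)) (mul_nonneg hlam (Real.sqrt_nonneg t))
  calc Real.exp (2 * lam * u) * erfc (u / Real.sqrt t + lam * Real.sqrt t)
      ≤ Real.exp (2 * lam * u) * Real.exp (-(u / Real.sqrt t + lam * Real.sqrt t) ^ 2) :=
        mul_le_mul_of_nonneg_left (erfc_le_exp_neg_sq hx) (Real.exp_pos _).le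
    _ = Real.exp (2 * lam * u + -(u / Real.sqrt t + lam * Real.sqrt t) ^ 2) :=
        (Real.exp_add _ _).symm
    _ = Real.exp (-u ^ 2 / t + -t * lam ^ 2) := by
        congr 1
        have key : ∀ st : ℝ, st ≠ 0 →
            2 * lam * u + -(u / st + lam * st) ^ 2 = -u ^ 2 / st ^ 2 + -st ^ 2 * lam ^ 2 := by
          intro st hst'
          field_simp
          ring
        have h := key (Real.sqrt t) hst0
        rw [hst] at h
        exact h
    _ = Real.exp (-u ^ 2 / t) * Real.exp (-t * lam ^ 2) := Real.exp_add _ _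

lemma S_summable (l : ℕ → ℝ) {t u : ℝ} (ht : 0 < t) (hu : 0 ≤ u) (hln : ∀ n, 0 ≤ l n)
    (hsum : Summable fun n => Real.exp (-t * (l n) ^ 2)) :
    Summable fun n => Real.exp (2 * l n * u) * erfc (u / Real.sqrt t + l n * Real.sqrt t) :=
  Summable.of_nonneg_of_le (fun n => term_nonneg _ _ _)
    (fun n => term_le ht hu (hln n)) (hsum.mul_left (Real.exp (-u ^ 2 / t)))

lemma S_nonneg (l : ℕ → ℝ) (t u : ℝ) :
    0 ≤ ∑' n, Real.exp (2 * l n * u) * erfc (u / Real.sqrt t + l n * Real.sqrt t) :=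
  tsum_nonneg fun n => term_nonneg _ _ _

lemma S_le (l : ℕ → ℝ) {t u : ℝ} (ht : 0 < t) (hu : 0 ≤ u) (hln : ∀ n, 0 ≤ l n)
    (hsum : Summable fun n => Real.exp (-t * (l n) ^ 2)) :
    (∑' n, Real.exp (2 * l n * u) * erfc (u / Real.sqrt t + l n * Real.sqrt t))
      ≤ Real.exp (-u ^ 2 / t) * ∑' n, Real.exp (-t * (l n) ^ 2) := by
  calc (∑' n, Real.exp (2 * l n * u) * erfc (u / Real.sqrt t + l n * Real.sqrt t))
      ≤ ∑' n, Real.exp (-u ^ 2 / t) * Real.exp (-t * (l n) ^ 2) :=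
        Summable.tsum_le_tsum (fun n => term_le ht hu (hln n))
          (S_summable l ht hu hln hsum) (hsum.mul_left _)
    _ = Real.exp (-u ^ 2 / t) * ∑' n, Real.exp (-t * (l n) ^ 2) := tsum_mul_left

lemma theta_aesm (l : ℕ → ℝ)
    (hsum : ∀ t : ℝ, 0 < t → Summable fun n => Real.exp (-t * (l n) ^ 2)) :
    AEStronglyMeasurable (fun t => ∑' n, Real.exp (-t * (l n) ^ 2))
      (volume.restrict (Set.Ioi 0)) := by
  apply aestronglyMeasurable_of_tendsto_ae (u := atTop)
    (f := fun (N : ℕ) (t : ℝ) => ∑ n ∈ Finset.range N, Real.exp (-t * (l n) ^ 2))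
  · intro N
    refine (Finset.measurable_sum _ fun n _ => ?_).aestronglyMeasurable
    exact Real.measurable_exp.comp (measurable_id.neg.mul_const _)
  · filter_upwards [ae_restrict_mem measurableSet_Ioi] with t ht
    exact (hsum t ht).hasSum.tendsto_sum_nat

lemma exp_neg_le (x : ℝ) (hx : 0 < x) (m : ℕ) : Real.exp (-x) ≤ (m.factorial : ℝ) * (1 / x) ^ m := by
  have h1 : x ^ m / m.factorial ≤ Real.exp x := Real.pow_div_factorial_le_exp _ hx.le m
  have h2 : (0:ℝ) < x ^ m / m.factorial := by positivity
  rw [Real.exp_neg]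
  calc (Real.exp x)⁻¹ ≤ (x ^ m / m.factorial)⁻¹ := inv_anti₀ h2 h1
    _ = (m.factorial : ℝ) * (1 / x) ^ m := by
        rw [inv_div, div_eq_mul_inv, ← inv_pow, one_div]

lemma theta_integrable (l : ℕ → ℝ) (hl0 : 0 < l 0) (hl : ∀ n, l 0 ≤ l n)
    (hsum : ∀ t : ℝ, 0 < t → Summable fun n => Real.exp (-t * (l n) ^ 2))
    (C k : ℝ) (hC : 0 < C) (hk : 0 < k)
    (hΘ : ∀ t : ℝ, 0 < t → t ≤ 1 → (∑' n, Real.exp (-t * (l n) ^ 2)) ≤ C * t ^ (-k))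
    (s a : ℝ) (ha : 0 < a) :
    IntegrableOn (fun t => t ^ (s - 1) * Real.exp (-a / t) * ∑' n, Real.exp (-t * (l n) ^ 2))
      (Set.Ioi 0) := by
  set Θ : ℝ → ℝ := fun t => ∑' n, Real.exp (-t * (l n) ^ 2) with hΘdef
  have hΘ0 : ∀ t, 0 ≤ Θ t := fun t => tsum_nonneg fun n => (Real.exp_pos _).le
  have hmeas : AEStronglyMeasurable (fun t : ℝ => t ^ (s - 1) * Real.exp (-a / t) * Θ t)
      (volume.restrict (Set.Ioi 0)) := by
    have h1 : AEStronglyMeasurable (fun t : ℝ => t ^ (s - 1)) (volume.restrict (Set.Ioi 0)) := by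
      apply AEStronglyMeasurable.congr
        (f := fun t : ℝ => Real.exp (Real.log t * (s - 1)))
      · exact (Real.measurable_exp.comp (Real.measurable_log.mul_const _)).aestronglyMeasurable
      · filter_upwards [ae_restrict_mem measurableSet_Ioi] with t ht
        rw [Real.rpow_def_of_pos ht]
    have h2 : Measurable fun t : ℝ => Real.exp (-a / t) :=
      Real.measurable_exp.comp (measurable_const.div measurable_id)
    exact (h1.mul h2.aestronglyMeasurable).mul (theta_aesm l hsum)
  obtain ⟨m, hm⟩ := exists_nat_ge (k + 1 - s)
  obtain ⟨m', hm'⟩ := exists_nat_ge (s - 1)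
  set b : ℝ := (l 0) ^ 2 with hbdef
  have hbpos : 0 < b := by positivity
  have int1 : IntegrableOn (fun t : ℝ => t ^ (s - 1) * Real.exp (-a / t) * Θ t) (Set.Ioc 0 1) := by
    set MC : ℝ := C * (m.factorial : ℝ) * (1 / a) ^ m with hMC
    refine Integrable.mono' ((integrableOn_const (s := Set.Ioc (0:ℝ) 1) (μ := volume) (C := MC) measure_Ioc_lt_top.ne))
      (hmeas.mono_measure (Measure.restrict_mono Ioc_subset_Ioi_self le_rfl)) ?_
    filter_upwards [ae_restrict_mem measurableSet_Ioc] with t ht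
    have ht0 : 0 < t := ht.1
    have ht1 : t ≤ 1 := ht.2
    have h0 : (0:ℝ) ≤ t ^ (s - 1) := Real.rpow_nonneg ht0.le _
    rw [Real.norm_eq_abs, abs_of_nonneg
      (mul_nonneg (mul_nonneg h0 (Real.exp_pos _).le) (hΘ0 t))]
    have hexp : Real.exp (-a / t) ≤ (m.factorial : ℝ) * (t / a) ^ m := by
      have := exp_neg_le (a / t) (by positivity) m
      rw [neg_div]
      calc Real.exp (-(a / t)) ≤ (m.factorial : ℝ) * (1 / (a / t)) ^ m := this
        _ = (m.factorial : ℝ) * (t / a) ^ m := by rw [one_div, inv_div]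
    calc t ^ (s - 1) * Real.exp (-a / t) * Θ t
        ≤ t ^ (s - 1) * ((m.factorial : ℝ) * (t / a) ^ m) * Θ t :=
          mul_le_mul_of_nonneg_right (mul_le_mul_of_nonneg_left hexp h0) (hΘ0 t)
      _ ≤ t ^ (s - 1) * ((m.factorial : ℝ) * (t / a) ^ m) * (C * t ^ (-k)) := by
          refine mul_le_mul_of_nonneg_left (hΘ t ht0 ht1) (mul_nonneg h0 (by positivity))
      _ = (C * (m.factorial : ℝ) * (1 / a) ^ m) * (t ^ (s - 1) * t ^ (m : ℕ) * t ^ (-k)) := by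
          rw [div_pow, one_div, inv_pow]
          ring
      _ ≤ MC := by
          rw [hMC]
          have heq : t ^ (s - 1) * (t : ℝ) ^ (m : ℕ) * t ^ (-k) = t ^ (s - 1 + m + -k) := by
            rw [← Real.rpow_natCast t m, ← Real.rpow_add ht0, ← Real.rpow_add ht0]
          rw [heq]
          have hle1 : t ^ (s - 1 + m + -k) ≤ 1 :=
            Real.rpow_le_one ht0.le ht1 (by linarith)
          calc C * (m.factorial : ℝ) * (1 / a) ^ m * t ^ (s - 1 + ↑m + -k)
              ≤ C * (m.factorial : ℝ) * (1 / a) ^ m * 1 :=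
                mul_le_mul_of_nonneg_left hle1 (by positivity)
            _ = C * (m.factorial : ℝ) * (1 / a) ^ m := mul_one _
  have int2 : IntegrableOn (fun t : ℝ => t ^ (s - 1) * Real.exp (-a / t) * Θ t) (Set.Ioi 1) := by
    set K : ℝ := (m'.factorial : ℝ) * (2 / b) ^ m' * Real.exp b * Θ 1 with hK
    refine Integrable.mono' ((exp_neg_integrableOn_Ioi 1 (half_pos hbpos)).const_mul K)
      (hmeas.mono_measure (Measure.restrict_mono (Ioi_subset_Ioi zero_le_one) le_rfl)) ?_
    filter_upwards [ae_restrict_mem measurableSet_Ioi] with t ht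
    have htt : 1 < t := ht
    have ht0 : (0:ℝ) < t := lt_trans zero_lt_one htt
    have h0 : (0:ℝ) ≤ t ^ (s - 1) := Real.rpow_nonneg ht0.le _
    rw [Real.norm_eq_abs, abs_of_nonneg
      (mul_nonneg (mul_nonneg h0 (Real.exp_pos _).le) (hΘ0 t))]
    have hΘt : Θ t ≤ Real.exp (-(t - 1) * b) * Θ 1 := by
      refine (Summable.tsum_le_tsum (fun n => ?_) (hsum t ht0) (((hsum 1 one_pos).mul_left _))).trans_eq
        tsum_mul_left
      rw [← Real.exp_add]
      refine Real.exp_le_exp.2 ?_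
      have h1 := hl n
      have h2 : l 0 ^ 2 ≤ l n ^ 2 := by nlinarith [hl0]
      have h3 : (0:ℝ) ≤ t - 1 := by linarith [htt]
      rw [hbdef]
      nlinarith
    have hrp : t ^ (s - 1) ≤ (m'.factorial : ℝ) * (2 / b) ^ m' * Real.exp (b / 2 * t) := by
      have h1 : t ^ (s - 1) ≤ t ^ (m' : ℝ) :=
        Real.rpow_le_rpow_of_exponent_le ht.le hm'
      have h3 : (b / 2 * t) ^ m' / (m'.factorial:ℝ) ≤ Real.exp (b / 2 * t) :=
        Real.pow_div_factorial_le_exp _ (by positivity) m'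
      have h4 : (t : ℝ) ^ (m' : ℕ) = (b / 2 * t) ^ m' * (2 / b) ^ m' := by
        rw [← mul_pow]
        congr 1
        field_simp
      calc t ^ (s - 1) ≤ t ^ (m' : ℝ) := h1
        _ = (t : ℝ) ^ (m' : ℕ) := Real.rpow_natCast t m'
        _ = (b / 2 * t) ^ m' * (2 / b) ^ m' := h4
        _ ≤ ((m'.factorial : ℝ) * Real.exp (b / 2 * t)) * (2 / b) ^ m' := by
            refine mul_le_mul_of_nonneg_right ?_ (by positivity)
            rw [div_le_iff₀ (by positivity : (0:ℝ) < (m'.factorial : ℝ))] at h3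
            linarith
        _ = (m'.factorial : ℝ) * (2 / b) ^ m' * Real.exp (b / 2 * t) := by ring
    have hexp1 : Real.exp (-a / t) ≤ 1 := by
      rw [Real.exp_le_one_iff, neg_div]
      exact neg_nonpos.2 (by positivity)
    calc t ^ (s - 1) * Real.exp (-a / t) * Θ t
        ≤ t ^ (s - 1) * 1 * (Real.exp (-(t - 1) * b) * Θ 1) := by
          refine mul_le_mul (mul_le_mul_of_nonneg_left hexp1 h0) hΘt (hΘ0 t)
            (mul_nonneg h0 zero_le_one)
      _ ≤ ((m'.factorial : ℝ) * (2 / b) ^ m' * Real.exp (b / 2 * t)) * 1 * (Real.exp (-(t - 1) * b) * Θ 1) := by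
          refine mul_le_mul_of_nonneg_right (mul_le_mul_of_nonneg_right hrp zero_le_one)
            (mul_nonneg (Real.exp_pos _).le (hΘ0 1))
      _ = K * Real.exp (-(b / 2) * t) := by
          have h6 : Real.exp (b / 2 * t) * Real.exp (-(t - 1) * b)
              = Real.exp b * Real.exp (-(b / 2) * t) := by
            rw [← Real.exp_add, ← Real.exp_add]
            congr 1
            ring
          rw [hK]
          linear_combination ((m'.factorial : ℝ) * (2 / b) ^ m' * Θ 1) * h6
  have hset : Set.Ioi (0:ℝ) = Set.Ioc 0 1 ∪ Set.Ioi 1 := (Set.Ioc_union_Ioi_eq_Ioi zero_le_one).symm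
  rw [hset]
  exact int1.union int2

/-- Proposition 2.1. Let `(λ_n)` be positive reals bounded below by `λ_0 > 0` with
`Θ(t) = Σ_n e^{−tλ_n²}` convergent for all `t > 0` and `Θ(t) ≤ C t^{−k}` for `0 < t ≤ 1`.
Let `c > 0` and for each `R > 0` let `φ_R : [0,∞) → [0,1]` be `C¹` with `φ_R = 1` on `[0,R]`,
`φ_R = 0` on `[2R,∞)` and `|φ_R′| ≤ c/R`. Then for every real `s` the double integral
`T₂(s,R) = (1/2) ∫_0^∞ t^{s−1} ∫_0^∞ φ_R′(u) Σ_n e^{2λ_n u} erfc(u/√t + λ_n√t) du dt`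
converges absolutely and `lim_{R→∞} T₂(s,R) = 0`. -/
theorem stmt8 (l : ℕ → ℝ) (hl0 : 0 < l 0) (hl : ∀ n, l 0 ≤ l n)
    (hsum : ∀ t : ℝ, 0 < t → Summable fun n => Real.exp (-t * (l n)^2))
    (C k : ℝ) (hC : 0 < C) (hk : 0 < k)
    (hΘ : ∀ t : ℝ, 0 < t → t ≤ 1 → (∑' n, Real.exp (-t * (l n)^2)) ≤ C * t ^ (-k))
    (c : ℝ) (hc : 0 < c)
    (φ : ℝ → ℝ → ℝ)
    (hφC1 : ∀ R : ℝ, 0 < R → ContDiffOn ℝ 1 (φ R) (Set.Ici 0))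
    (hφ01 : ∀ R : ℝ, 0 < R → ∀ u : ℝ, 0 ≤ u → φ R u ∈ Set.Icc (0:ℝ) 1)
    (hφ1 : ∀ R : ℝ, 0 < R → ∀ u : ℝ, 0 ≤ u → u ≤ R → φ R u = 1)
    (hφ0 : ∀ R : ℝ, 0 < R → ∀ u : ℝ, 2*R ≤ u → φ R u = 0)
    (hφ' : ∀ R : ℝ, 0 < R → ∀ u : ℝ, 0 ≤ u → |derivWithin (φ R) (Set.Ici 0) u| ≤ c/R)
    (s : ℝ) :
    (∀ R : ℝ, 0 < R → IntegrableOn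
        (fun p : ℝ × ℝ => p.1 ^ (s-1) * (derivWithin (φ R) (Set.Ici 0) p.2 *
            ∑' n, Real.exp (2 * l n * p.2) * erfc (p.2 / Real.sqrt p.1 + l n * Real.sqrt p.1)))
        (Set.Ioi 0 ×ˢ Set.Ioi 0)) ∧
    Tendsto (fun R : ℝ => (1/2) * ∫ t in Set.Ioi (0:ℝ), t ^ (s-1) *
        ∫ u in Set.Ioi (0:ℝ), derivWithin (φ R) (Set.Ici 0) u *
          ∑' n, Real.exp (2 * l n * u) * erfc (u / Real.sqrt t + l n * Real.sqrt t))
      atTop (nhds 0) := by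
  have hln : ∀ n, 0 ≤ l n := fun n => (hl0.trans_le (hl n)).le
  set Θ : ℝ → ℝ := fun t => ∑' n, Real.exp (-t * (l n) ^ 2) with hΘdef
  have hΘ0 : ∀ t, 0 ≤ Θ t := fun t => tsum_nonneg fun n => (Real.exp_pos _).le
  have hΘint : ∀ a : ℝ, 0 < a →
      IntegrableOn (fun t => t ^ (s - 1) * Real.exp (-a / t) * Θ t) (Set.Ioi 0) :=
    fun a ha => theta_integrable l hl0 hl hsum C k hC hk hΘ s a ha
  have hφ'0 : ∀ R : ℝ, 0 < R → ∀ u : ℝ, 0 < u → u ∉ Set.Icc R (2 * R) →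
      derivWithin (φ R) (Set.Ici 0) u = 0 := by
    intro R hR u hu hu'
    have hUD : UniqueDiffWithinAt ℝ (Set.Ici (0:ℝ)) u := (uniqueDiffOn_Ici 0) u hu.le
    simp only [Set.mem_Icc, not_and_or, not_le] at hu'
    rcases hu' with h | h
    · have h1 : φ R =ᶠ[nhdsWithin u (Set.Ici 0)] fun _ => (1 : ℝ) := by
        have hmem : Set.Ioo (0:ℝ) R ∈ nhdsWithin u (Set.Ici 0) :=
          nhdsWithin_le_nhds (isOpen_Ioo.mem_nhds ⟨hu, h⟩)
        filter_upwards [hmem] with v hv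
        exact hφ1 R hR v hv.1.le hv.2.le
      rw [h1.derivWithin_eq (hφ1 R hR u hu.le h.le)]
      exact (hasDerivWithinAt_const _ _ _).derivWithin hUD
    · have h1 : φ R =ᶠ[nhdsWithin u (Set.Ici 0)] fun _ => (0 : ℝ) := by
        have hmem : Set.Ioi (2*R) ∈ nhdsWithin u (Set.Ici 0) :=
          nhdsWithin_le_nhds (isOpen_Ioi.mem_nhds h)
        filter_upwards [hmem] with v hv
        exact hφ0 R hR v (le_of_lt hv)
      rw [h1.derivWithin_eq (hφ0 R hR u h.le)]
      exact (hasDerivWithinAt_const _ _ _).derivWithin hUD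
  have key : ∀ R : ℝ, 0 < R → ∀ t u : ℝ, 0 < t → 0 < u →
      ‖derivWithin (φ R) (Set.Ici 0) u *
          ∑' n, Real.exp (2 * l n * u) * erfc (u / Real.sqrt t + l n * Real.sqrt t)‖
        ≤ (c / R * (Real.exp (-R ^ 2 / t) * Θ t)) *
            (Set.Icc R (2 * R)).indicator (fun _ => (1:ℝ)) u := by
    intro R hR t u ht hu
    by_cases hmem : u ∈ Set.Icc R (2 * R)
    · rw [Set.indicator_of_mem hmem, mul_one, Real.norm_eq_abs, abs_mul,
        abs_of_nonneg (S_nonneg l t u)]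
      have h3 : (∑' n, Real.exp (2 * l n * u) * erfc (u / Real.sqrt t + l n * Real.sqrt t))
          ≤ Real.exp (-R ^ 2 / t) * Θ t := by
        refine (S_le l ht hu.le hln (hsum t ht)).trans ?_
        refine mul_le_mul_of_nonneg_right (Real.exp_le_exp.2 ?_) (hΘ0 t)
        have hu2 : R ^ 2 ≤ u ^ 2 := by nlinarith [hmem.1]
        exact (div_le_div_iff_of_pos_right ht).2 (neg_le_neg hu2)
      exact mul_le_mul (hφ' R hR u hu.le) h3 (S_nonneg l t u) (by positivity)
    · rw [Set.indicator_of_notMem hmem, mul_zero, hφ'0 R hR u hu hmem, zero_mul, norm_zero]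
  have hind : ∀ R : ℝ, 0 < R → Integrable
      ((Set.Icc R (2 * R)).indicator (fun _ => (1:ℝ))) (volume.restrict (Set.Ioi 0)) := by
    intro R hR
    rw [integrable_indicator_iff measurableSet_Icc]
    exact integrableOn_const
      (lt_of_le_of_lt (Measure.restrict_apply_le _ _) measure_Icc_lt_top).ne
  have part1 : ∀ R : ℝ, 0 < R → IntegrableOn
      (fun p : ℝ × ℝ => p.1 ^ (s-1) * (derivWithin (φ R) (Set.Ici 0) p.2 *
          ∑' n, Real.exp (2 * l n * p.2) * erfc (p.2 / Real.sqrt p.1 + l n * Real.sqrt p.1)))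
      (Set.Ioi 0 ×ˢ Set.Ioi 0) := by
    intro R hR
    have hmemae : ∀ᵐ p : ℝ × ℝ ∂(volume.restrict (Set.Ioi 0 ×ˢ Set.Ioi 0)),
        p ∈ Set.Ioi (0:ℝ) ×ˢ Set.Ioi (0:ℝ) :=
      ae_restrict_mem (measurableSet_Ioi.prod measurableSet_Ioi)
    have hmeasF : AEStronglyMeasurable
        (fun p : ℝ × ℝ => p.1 ^ (s-1) * (derivWithin (φ R) (Set.Ici 0) p.2 *
          ∑' n, Real.exp (2 * l n * p.2) * erfc (p.2 / Real.sqrt p.1 + l n * Real.sqrt p.1)))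
        (volume.restrict (Set.Ioi 0 ×ˢ Set.Ioi 0)) := by
      have hcongr : (fun p : ℝ × ℝ => Real.exp (Real.log p.1 * (s-1)) * (deriv (φ R) p.2 *
            ∑' n, Real.exp (2 * l n * p.2) * erfc (p.2 / Real.sqrt p.1 + l n * Real.sqrt p.1)))
          =ᵐ[volume.restrict (Set.Ioi 0 ×ˢ Set.Ioi 0)]
          (fun p : ℝ × ℝ => p.1 ^ (s-1) * (derivWithin (φ R) (Set.Ici 0) p.2 *
            ∑' n, Real.exp (2 * l n * p.2) * erfc (p.2 / Real.sqrt p.1 + l n * Real.sqrt p.1))) := by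
        filter_upwards [hmemae] with p hp
        have hp1 : p.1 ∈ Set.Ioi (0:ℝ) := (Set.mem_prod.1 hp).1
        have hp2 : p.2 ∈ Set.Ioi (0:ℝ) := (Set.mem_prod.1 hp).2
        rw [Real.rpow_def_of_pos hp1, derivWithin_of_mem_nhds (Ici_mem_nhds hp2)]
      refine AEStronglyMeasurable.congr ?_ hcongr
      apply aestronglyMeasurable_of_tendsto_ae (u := atTop)
        (f := fun (N : ℕ) (p : ℝ × ℝ) => Real.exp (Real.log p.1 * (s-1)) * (deriv (φ R) p.2 *
          ∑ n ∈ Finset.range N,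
            Real.exp (2 * l n * p.2) * erfc (p.2 / Real.sqrt p.1 + l n * Real.sqrt p.1)))
      · intro N
        apply Measurable.aestronglyMeasurable
        refine (Real.measurable_exp.comp ((Real.measurable_log.comp measurable_fst).mul_const _)).mul ?_
        refine ((measurable_deriv (φ R)).comp measurable_snd).mul ?_
        refine Finset.measurable_sum _ fun n _ => ?_
        refine (Real.measurable_exp.comp (measurable_snd.const_mul _)).mul ?_
        refine erfc_measurable.comp ?_
        exact (measurable_snd.div (Real.continuous_sqrt.measurable.comp measurable_fst)).add
          ((Real.continuous_sqrt.measurable.comp measurable_fst).const_mul _)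
      · filter_upwards [hmemae] with p hp
        have hp1 : p.1 ∈ Set.Ioi (0:ℝ) := (Set.mem_prod.1 hp).1
        have hp2 : p.2 ∈ Set.Ioi (0:ℝ) := (Set.mem_prod.1 hp).2
        exact Tendsto.const_mul _ (Tendsto.const_mul _
          ((S_summable l hp1 (le_of_lt hp2) hln (hsum _ hp1)).hasSum.tendsto_sum_nat))
    have hboundInt : Integrable (fun p : ℝ × ℝ =>
        (c / R * (p.1 ^ (s - 1) * Real.exp (-R ^ 2 / p.1) * Θ p.1)) *
          (Set.Icc R (2 * R)).indicator (fun _ => (1:ℝ)) p.2)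
        (volume.restrict (Set.Ioi 0 ×ˢ Set.Ioi 0)) := by
      have h1 : Integrable (fun t : ℝ => c / R * (t ^ (s - 1) * Real.exp (-R ^ 2 / t) * Θ t))
          (volume.restrict (Set.Ioi 0)) := (hΘint (R ^ 2) (by positivity)).const_mul _
      have h3 := h1.mul_prod (hind R hR)
      rw [Measure.prod_restrict] at h3
      exact h3
    refine Integrable.mono' hboundInt hmeasF ?_
    filter_upwards [hmemae] with p hp
    have hp1 : p.1 ∈ Set.Ioi (0:ℝ) := (Set.mem_prod.1 hp).1
    have hp2 : p.2 ∈ Set.Ioi (0:ℝ) := (Set.mem_prod.1 hp).2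
    rw [norm_mul]
    calc ‖p.1 ^ (s - 1)‖ * ‖derivWithin (φ R) (Set.Ici 0) p.2 *
            ∑' n, Real.exp (2 * l n * p.2) * erfc (p.2 / Real.sqrt p.1 + l n * Real.sqrt p.1)‖
        ≤ p.1 ^ (s - 1) * ((c / R * (Real.exp (-R ^ 2 / p.1) * Θ p.1)) *
            (Set.Icc R (2 * R)).indicator (fun _ => (1:ℝ)) p.2) := by
          rw [Real.norm_eq_abs, abs_of_nonneg (Real.rpow_nonneg (le_of_lt hp1) _)]
          exact mul_le_mul_of_nonneg_left (key R hR p.1 p.2 hp1 hp2)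
            (Real.rpow_nonneg (le_of_lt hp1) _)
      _ = (c / R * (p.1 ^ (s - 1) * Real.exp (-R ^ 2 / p.1) * Θ p.1)) *
            (Set.Icc R (2 * R)).indicator (fun _ => (1:ℝ)) p.2 := by ring
  have hJle : ∀ R : ℝ, 0 < R → ∀ t : ℝ, 0 < t →
      ‖∫ u in Set.Ioi (0:ℝ), derivWithin (φ R) (Set.Ici 0) u *
          ∑' n, Real.exp (2 * l n * u) * erfc (u / Real.sqrt t + l n * Real.sqrt t)‖
        ≤ c * (Real.exp (-R ^ 2 / t) * Θ t) := by
    intro R hR t ht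
    have hg : Integrable (fun u => (c / R * (Real.exp (-R ^ 2 / t) * Θ t)) *
        (Set.Icc R (2 * R)).indicator (fun _ => (1:ℝ)) u) (volume.restrict (Set.Ioi 0)) :=
      (hind R hR).const_mul _
    refine (norm_integral_le_of_norm_le hg ?_).trans_eq ?_
    · filter_upwards [ae_restrict_mem measurableSet_Ioi] with u hu
      exact key R hR t u ht hu
    · have hIccsub : Set.Icc R (2 * R) ∩ Set.Ioi 0 = Set.Icc R (2 * R) :=
        Set.inter_eq_self_of_subset_left fun x hx => lt_of_lt_of_le hR hx.1
      have hint : (∫ u in Set.Ioi (0:ℝ), (Set.Icc R (2 * R)).indicator (fun _ => (1:ℝ)) u) = R := by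
        rw [integral_indicator measurableSet_Icc, Measure.restrict_restrict measurableSet_Icc,
          hIccsub, setIntegral_const, Real.volume_real_Icc_of_le (by linarith), smul_eq_mul, mul_one]
        ring
      rw [integral_const_mul, hint]
      field_simp
  have houter : ∀ R : ℝ, 0 < R →
      ‖∫ t in Set.Ioi (0:ℝ), t ^ (s - 1) * ∫ u in Set.Ioi (0:ℝ),
          derivWithin (φ R) (Set.Ici 0) u *
            ∑' n, Real.exp (2 * l n * u) * erfc (u / Real.sqrt t + l n * Real.sqrt t)‖
        ≤ c * ∫ t in Set.Ioi (0:ℝ), t ^ (s - 1) * Real.exp (-R ^ 2 / t) * Θ t := by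
    intro R hR
    have hgi : Integrable (fun t => c * (t ^ (s - 1) * Real.exp (-R ^ 2 / t) * Θ t))
        (volume.restrict (Set.Ioi 0)) := (hΘint (R ^ 2) (by positivity)).const_mul c
    refine (norm_integral_le_of_norm_le hgi ?_).trans_eq (integral_const_mul _ _)
    filter_upwards [ae_restrict_mem measurableSet_Ioi] with t ht
    rw [norm_mul]
    calc ‖t ^ (s - 1)‖ * ‖∫ u in Set.Ioi (0:ℝ), derivWithin (φ R) (Set.Ici 0) u *
            ∑' n, Real.exp (2 * l n * u) * erfc (u / Real.sqrt t + l n * Real.sqrt t)‖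
        ≤ t ^ (s - 1) * (c * (Real.exp (-R ^ 2 / t) * Θ t)) := by
          rw [Real.norm_eq_abs, abs_of_nonneg (Real.rpow_nonneg (le_of_lt ht) _)]
          exact mul_le_mul_of_nonneg_left (hJle R hR t ht) (Real.rpow_nonneg (le_of_lt ht) _)
      _ = c * (t ^ (s - 1) * Real.exp (-R ^ 2 / t) * Θ t) := by ring
  have hgto : Tendsto (fun R : ℝ => ∫ t in Set.Ioi (0:ℝ),
      t ^ (s - 1) * Real.exp (-R ^ 2 / t) * Θ t) atTop (nhds 0) := by
    suffices h : Tendsto (fun R : ℝ => ∫ t in Set.Ioi (0:ℝ),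
        t ^ (s - 1) * Real.exp (-R ^ 2 / t) * Θ t) atTop
        (nhds (∫ t in Set.Ioi (0:ℝ), (0:ℝ))) by simpa using h
    refine tendsto_integral_filter_of_dominated_convergence (l := (atTop : Filter ℝ))
      (μ := volume.restrict (Set.Ioi 0))
      (F := fun R t => t ^ (s - 1) * Real.exp (-R ^ 2 / t) * Θ t) (f := fun _ => (0:ℝ))
      (fun t => t ^ (s - 1) * Real.exp (-1 / t) * Θ t) ?_ ?_ (hΘint 1 one_pos) ?_
    · filter_upwards [eventually_ge_atTop (1:ℝ)] with R hR
      exact (hΘint (R ^ 2) (by nlinarith)).aestronglyMeasurable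
    · filter_upwards [eventually_ge_atTop (1:ℝ)] with R hR
      filter_upwards [ae_restrict_mem measurableSet_Ioi] with t ht
      have ht0 : (0:ℝ) < t := ht
      rw [Real.norm_eq_abs, abs_of_nonneg (mul_nonneg (mul_nonneg
        (Real.rpow_nonneg ht0.le _) (Real.exp_pos _).le) (hΘ0 t))]
      have hexp : Real.exp (-R ^ 2 / t) ≤ Real.exp (-1 / t) :=
        Real.exp_le_exp.2 ((div_le_div_iff_of_pos_right ht0).2 (by nlinarith))
      exact mul_le_mul_of_nonneg_right
        (mul_le_mul_of_nonneg_left hexp (Real.rpow_nonneg ht0.le _)) (hΘ0 t)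
    · filter_upwards [ae_restrict_mem measurableSet_Ioi] with t ht
      have ht0 : (0:ℝ) < t := ht
      have h1 : Tendsto (fun R : ℝ => -(R ^ 2 / t)) atTop atBot :=
        tendsto_neg_atTop_atBot.comp ((tendsto_pow_atTop two_ne_zero).atTop_div_const ht0)
      have h2 : Tendsto (fun R : ℝ => Real.exp (-(R ^ 2 / t))) atTop (nhds 0) :=
        Real.tendsto_exp_atBot.comp h1
      have h3 := (h2.const_mul (t ^ (s - 1))).mul_const (Θ t)
      simpa [neg_div] using h3
  refine ⟨part1, ?_⟩
  have hg0 : Tendsto (fun R : ℝ => 1/2 * (c * ∫ t in Set.Ioi (0:ℝ),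
      t ^ (s - 1) * Real.exp (-R ^ 2 / t) * Θ t)) atTop (nhds 0) := by
    have h4 := ((hgto.const_mul c).const_mul (1/2 : ℝ))
    simpa using h4
  refine squeeze_zero_norm' ?_ hg0
  filter_upwards [eventually_gt_atTop (0:ℝ)] with R hR
  rw [norm_mul]
  have h5 : ‖(1:ℝ)/2‖ = 1/2 := by rw [Real.norm_eq_abs]; norm_num
  rw [h5]
  exact mul_le_mul_of_nonneg_left (houter R hR) (by norm_num)
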